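/- Let f : 𝔽₂ⁿ → 𝔽₂, f ≢ 0, have stratified representation with layer sizes k₁, …, k_r and canalizing depth k = k₁ + ⋯ + k_r. Then f is a nested canalizing function (in the sense of Definition 4.3, with respect to some permutation σ ∈ S_n, inputs a₁,…,a_n and outputs b₁,…,b_n) if and only if k = n, i.e., every variable of f appears in one of the layers M₁, …, M_r and the core polynomial p_C contains no variables. -/

import Mathlib

set_option linter.unusedSectionVars false
set_option maxHeartbeats 1000000


/-- A Boolean function `f` is essential in (depends on) the variable `v` if flipping
the value of `v` can change the value of `f`. -/
def EssentialIn {V : Type*} [DecidableEq V] (f : (V → ZMod 2) → ZMod 2) (v : V) : Prop :=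
  ∃ x, f x ≠ f (Function.update x v (x v + 1))

/-- A Boolean function is canalizing if some variable `v` has an input value `a` that
forces the output value `b`. -/
def IsCanalizing {V : Type*} (f : (V → ZMod 2) → ZMod 2) : Prop :=
  ∃ (v : V) (a b : ZMod 2), ∀ x, x v = a → f x = b

/-- The extended monomial on the variable set `S` with constants `a`,
`M(x) = ∏_{j ∈ S} (x_j + a_j)`. -/
def extMonomial {V : Type*} (S : Finset V) (a : V → ZMod 2) (x : V → ZMod 2) : ZMod 2 :=
  ∏ j ∈ S, (x j + a j)

/-- The nested form `M₁(M₂(⋯(M_{r-1}(M_r·p + 1) + 1)⋯) + 1)` determined by a list of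
layers (variable sets) `L`, constants `a`, and a core polynomial `p`. For `L = []` it
is just `p`. -/
def nestedLayers {V : Type*} (a : V → ZMod 2) (p : (V → ZMod 2) → ZMod 2) :
    List (Finset V) → (V → ZMod 2) → ZMod 2
  | [], x => p x
  | [S], x => extMonomial S a x * p x
  | S :: T :: Ss, x => extMonomial S a x * (nestedLayers a p (T :: Ss) x + 1)

/-- `IsStratification f L a p q` says that
`f = M₁(M₂(⋯(M_{r-1}(M_r·p_C + 1) + 1)⋯) + 1) + q` is a representation of `f` as in
the He–Macauley stratification theorem: the layers `Mᵢ = ∏_{j ∈ Sᵢ} (x_j + a_j)` are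
nonconstant extended monomials in pairwise disjoint variable sets, the core polynomial
`p` is independent of all layer variables and is identically `1` or non-canalizing,
and the exceptional-case conditions hold (if `p ≡ 1` and `r ≠ 1` then `k_r ≥ 2`; if
`p ≡ 1`, `r = 1`, `k₁ = 1` then `q = 0`; and for `r = 0` the representation is
`f = p_C`, i.e. `q = 0`). -/
def IsStratification {V : Type*} [DecidableEq V] (f : (V → ZMod 2) → ZMod 2)
    (L : List (Finset V)) (a : V → ZMod 2) (p : (V → ZMod 2) → ZMod 2) (q : ZMod 2) :
    Prop :=
  (∀ S ∈ L, S.Nonempty) ∧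
  L.Pairwise Disjoint ∧
  (∀ S ∈ L, ∀ v ∈ S, ¬ EssentialIn p v) ∧
  (p = (fun _ => 1) ∨ ¬ IsCanalizing p) ∧
  (p = (fun _ => 1) → L.length ≠ 1 → ∀ S ∈ L.getLast?, 2 ≤ S.card) ∧
  (p = (fun _ => 1) → ∀ S, L = [S] → S.card = 1 → q = 0) ∧
  (L = [] → q = 0) ∧
  f = fun x => nestedLayers a p L x + q

/-- `f` is nested canalizing with respect to the permutation `σ`, canalizing inputs
`A` and canalized outputs `B` (Definition 4.3): if `i` is the first index (in the
order given by `σ`) whose variable receives its canalizing input, then `f x = B i`,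
and if no variable receives its canalizing input then `f x = 1 + B n` (`B` at the
maximal index). -/
def IsNCF {n : ℕ} (f : (Fin n → ZMod 2) → ZMod 2) (σ : Equiv.Perm (Fin n))
    (A B : Fin n → ZMod 2) : Prop :=
  (∀ x (i : Fin n), (∀ j : Fin n, j < i → x (σ j) ≠ A j) → x (σ i) = A i → f x = B i) ∧
  (∀ x, (∀ i : Fin n, x (σ i) ≠ A i) → ∀ i : Fin n, (∀ j : Fin n, j ≤ i) → f x = 1 + B i)

-- ZMod 2 helpers
lemma z2_ne_iff (u w : ZMod 2) : u ≠ w ↔ u = w + 1 := by revert u w; decide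
lemma z2_add_one_add (u : ZMod 2) : u + 1 + u = 1 := by revert u; decide
lemma z2_add_self (u : ZMod 2) : u + u = 0 := by revert u; decide
lemma z2_ne_one_add (u : ZMod 2) : u ≠ 1 + u := by revert u; decide
lemma z2_add_one_ne (u : ZMod 2) : u + 1 ≠ u := by revert u; decide
lemma z2_cases (u w : ZMod 2) : u = w ∨ u = w + 1 := by revert u w; decide
lemma z2_two (u : ZMod 2) : u + 1 + 1 = u := by revert u; decide
lemma z2_one_add_ne (u : ZMod 2) : 1 + u ≠ u := by revert u; decide
lemma z2_cancel (u w : ZMod 2) : u + w + w = u := by revert u w; decide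
lemma z2_sub_one (u : ZMod 2) : u - 1 = u + 1 := by revert u; decide

section helpers
variable {V : Type*} [DecidableEq V] {a : V → ZMod 2} {p : (V → ZMod 2) → ZMod 2}

lemma not_essential_update {v : V} (h : ¬ EssentialIn p v) (x : V → ZMod 2) (c : ZMod 2) :
    p (Function.update x v c) = p x := by
  rw [EssentialIn] at h; push_neg at h
  rcases z2_cases c (x v) with hc | hc
  · subst hc; rw [Function.update_eq_self]
  · subst hc; exact (h x).symm

lemma p_override (T : Finset V) (hp : ∀ v ∈ T, ¬ EssentialIn p v) (x y : V → ZMod 2) :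
    p (fun j => if j ∈ T then y j else x j) = p x := by
  induction T using Finset.induction_on with
  | empty => simp
  | insert v T hv ih =>
    have : (fun j => if j ∈ insert v T then y j else x j)
        = Function.update (fun j => if j ∈ T then y j else x j) v (y v) := by
      funext j
      by_cases hj : j = v
      · subst hj; simp
      · simp [Function.update_of_ne hj, hj, Finset.mem_insert]
    rw [this, not_essential_update (hp v (Finset.mem_insert_self v T)),
      ih (fun w hw => hp w (Finset.mem_insert_of_mem hw))]

lemma p_eq_of_agree_off (T : Finset V) (hp : ∀ v ∈ T, ¬ EssentialIn p v) (x z : V → ZMod 2)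
    (h : ∀ j ∉ T, x j = z j) : p x = p z := by
  have h2 := p_override T hp z x
  have : (fun j => if j ∈ T then x j else z j) = x := by
    funext j; by_cases hj : j ∈ T <;> simp [hj, (h j ·)]
  rw [this] at h2; exact h2

lemma extMonomial_eq_one {S : Finset V} {x} (h : ∀ j ∈ S, x j = a j + 1) :
    extMonomial S a x = 1 :=
  Finset.prod_eq_one fun j hj => by rw [h j hj]; exact z2_add_one_add _

lemma extMonomial_eq_zero {S : Finset V} {x} {v} (hv : v ∈ S) (h : x v = a v) :
    extMonomial S a x = 0 :=
  Finset.prod_eq_zero hv (by rw [h]; exact z2_add_self _)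

lemma nestedLayers_cons (S : Finset V) (M : List (Finset V)) (hM : M ≠ []) (x) :
    nestedLayers a p (S :: M) x = extMonomial S a x * (nestedLayers a p M x + 1) := by
  cases M with
  | nil => exact absurd rfl hM
  | cons T Ms => rfl

lemma nestedLayers_zero {S : Finset V} (M : List (Finset V)) (x)
    (h : extMonomial S a x = 0) : nestedLayers a p (S :: M) x = 0 := by
  cases M with
  | nil => simp [nestedLayers, h]
  | cons T Ms => simp [nestedLayers, h]

lemma nestedLayers_allOne (L : List (Finset V)) (hL : L ≠ []) (x)
    (h : ∀ S ∈ L, extMonomial S a x = 1) :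
    nestedLayers a p L x = p x + ((L.length + 1 : ℕ) : ZMod 2) := by
  induction L with
  | nil => exact absurd rfl hL
  | cons S M ih =>
    cases M with
    | nil =>
      show extMonomial S a x * p x = _
      rw [h S (by simp), one_mul]
      norm_num
      decide
    | cons T Ms =>
      rw [nestedLayers_cons _ _ (by simp), h S (by simp), one_mul,
        ih (by simp) (fun U hU => h U (by simp [hU]))]
      simp only [List.length_cons]
      push_cast
      ring

lemma nestedLayers_append_ones (L₁ M : List (Finset V)) (hM : M ≠ []) (x)
    (h1 : ∀ S ∈ L₁, extMonomial S a x = 1) :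
    nestedLayers a p (L₁ ++ M) x = nestedLayers a p M x + (L₁.length : ZMod 2) := by
  induction L₁ with
  | nil => simp
  | cons S L₁' ih =>
    rw [List.cons_append, nestedLayers_cons _ _ (by simp [hM]), h1 S (by simp), one_mul,
      ih (fun U hU => h1 U (by simp [hU]))]
    simp only [List.length_cons]
    push_cast
    ring

lemma nestedLayers_update (L : List (Finset V)) (v : V) (hv : ∀ S ∈ L, v ∉ S)
    (x : V → ZMod 2) (c : ZMod 2) (hp : ∀ y c', p (Function.update y v c') = p y) :
    nestedLayers a p L (Function.update x v c) = nestedLayers a p L x := by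
  induction L with
  | nil => exact hp x c
  | cons S M ih =>
    have hM : extMonomial S a (Function.update x v c) = extMonomial S a x :=
      Finset.prod_congr rfl fun j hj => by
        rw [Function.update_of_ne (fun hh => hv S (by simp) (by rwa [hh] at hj))]
    cases M with
    | nil => show extMonomial _ _ _ * p _ = extMonomial _ _ _ * p _; rw [hM, hp]
    | cons T Ms =>
      rw [nestedLayers_cons S (T :: Ms) (by simp), nestedLayers_cons S (T :: Ms) (by simp), hM,
        ih (fun U hU => hv U (by simp [hU]))]

-- takeWhile
lemma takeWhile_layers {v : V} (L₁ : List (Finset V)) (S : Finset V) (L₂ : List (Finset V))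
    (h1 : ∀ T ∈ L₁, v ∉ T) (h2 : v ∈ S) :
    (L₁ ++ S :: L₂).takeWhile (fun T => decide (v ∉ T)) = L₁ := by
  induction L₁ with
  | nil => simp [List.takeWhile_cons, h2]
  | cons T L₁' ih =>
    rw [List.cons_append, List.takeWhile_cons, if_pos (by simp [h1 T (by simp)]),
      ih (fun U hU => h1 U (by simp [hU]))]

-- union of list of finsets
def lUnion (L : List (Finset V)) : Finset V := L.foldr (· ∪ ·) ∅

lemma mem_lUnion {L : List (Finset V)} {v : V} : v ∈ lUnion L ↔ ∃ S ∈ L, v ∈ S := by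
  induction L with
  | nil => simp [lUnion]
  | cons S M ih =>
    show v ∈ S ∪ lUnion M ↔ _
    simp only [Finset.mem_union, ih, List.mem_cons]
    constructor
    · rintro (hv | ⟨T, hT, hvT⟩)
      · exact ⟨S, Or.inl rfl, hv⟩
      · exact ⟨T, Or.inr hT, hvT⟩
    · rintro ⟨T, (rfl | hT), hvT⟩
      · exact Or.inl hvT
      · exact Or.inr ⟨T, hT, hvT⟩

lemma card_lUnion {L : List (Finset V)} (h : L.Pairwise Disjoint) :
    (lUnion L).card = (L.map Finset.card).sum := by
  induction L with
  | nil => simp [lUnion]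
  | cons S M ih =>
    have hd : Disjoint S (lUnion M) := by
      rw [Finset.disjoint_left]
      intro v hvS hvU
      obtain ⟨T, hT, hvT⟩ := mem_lUnion.1 hvU
      exact Finset.disjoint_left.1 ((List.pairwise_cons.1 h).1 T hT) hvS hvT
    show (S ∪ lUnion M).card = _
    rw [Finset.card_union_of_disjoint hd, ih (List.pairwise_cons.1 h).2]
    simp

end helpers


section helpers2
variable {V : Type*} [DecidableEq V]

lemma dec_lemma (a : V → ZMod 2) :
    ∀ (L : List (Finset V)) (k : ℕ) (hk : k < (L.flatMap Finset.toList).length)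
      (x : V → ZMod 2),
    (∀ j (hj : j < k), x ((L.flatMap Finset.toList)[j]'(lt_trans hj hk))
        = a ((L.flatMap Finset.toList)[j]'(lt_trans hj hk)) + 1) →
    ∃ L₁ S L₂, L = L₁ ++ S :: L₂ ∧ (∀ T ∈ L₁, ∀ v ∈ T, x v = a v + 1) ∧
      ((L.flatMap Finset.toList)[k]'hk ∈ S) := by
  intro L
  induction L with
  | nil => intro k hk; simp at hk
  | cons S L' ih =>
    intro k hk x hmiss
    simp only [List.flatMap_cons] at hk hmiss ⊢
    by_cases hks : k < S.toList.length
    · refine ⟨[], S, L', by simp, by simp, ?_⟩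
      rw [List.getElem_append_left hks]
      exact Finset.mem_toList.1 (List.getElem_mem _)
    · push_neg at hks
      have hk' : k - S.toList.length < (L'.flatMap Finset.toList).length := by
        rw [List.length_append] at hk; omega
      have hmiss' : ∀ j (hj : j < k - S.toList.length),
          x ((L'.flatMap Finset.toList)[j]'(lt_trans hj hk'))
            = a ((L'.flatMap Finset.toList)[j]'(lt_trans hj hk')) + 1 := by
        intro j hj
        have h1 := hmiss (S.toList.length + j) (by omega)
        rw [List.getElem_append_right (by omega : S.toList.length ≤ S.toList.length + j)] at h1
        simpa using h1
      obtain ⟨L₁, T, L₂, hEq, hAvoid, hMem⟩ := ih (k - S.toList.length) hk' x hmiss'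
      refine ⟨S :: L₁, T, L₂, by rw [List.cons_append, hEq], ?_, ?_⟩
      · intro U hU v hv
        rcases List.mem_cons.1 hU with rfl | hU'
        · obtain ⟨j, hj, hget⟩ := List.mem_iff_getElem.1 (Finset.mem_toList.2 hv)
          have h1 := hmiss j (by omega)
          rw [List.getElem_append_left hj] at h1
          rwa [hget] at h1
        · exact hAvoid U hU' v hv
      · rw [List.getElem_append_right hks]
        exact hMem

lemma nodup_flatMap_toList {L : List (Finset V)} (h : L.Pairwise Disjoint) :
    (L.flatMap Finset.toList).Nodup := by
  induction L with
  | nil => simp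
  | cons S M ih =>
    rw [List.flatMap_cons, List.nodup_append]
    refine ⟨Finset.nodup_toList S, ih (List.pairwise_cons.1 h).2, ?_⟩
    intro v hvS w hvM rfl
    rw [List.mem_flatMap] at hvM
    obtain ⟨T, hT, hvT⟩ := hvM
    exact Finset.disjoint_left.1 ((List.pairwise_cons.1 h).1 T hT)
      (Finset.mem_toList.1 hvS) (Finset.mem_toList.1 hvT)

lemma getLast_flatMap_mem :
    ∀ (L : List (Finset V)) (hL : L ≠ []) (hne : ∀ S ∈ L, S.Nonempty)
      (hfl : L.flatMap Finset.toList ≠ []),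
    (L.flatMap Finset.toList).getLast hfl ∈ L.getLast hL := by
  intro L
  induction L with
  | nil => intro hL; exact absurd rfl hL
  | cons S M ih =>
    intro hL hne hfl
    cases M with
    | nil =>
      have h1 : S.toList ≠ [] := fun h2 => (hne S (by simp)).ne_empty (Finset.toList_eq_nil.1 h2)
      have hEq : (S :: []).flatMap Finset.toList = S.toList := by simp
      rw [List.getLast_congr _ h1 hEq, show [S].getLast hL = S from rfl]
      exact Finset.mem_toList.1 (List.getLast_mem h1)
    | cons T M' =>
      have hne' : ∀ U ∈ T :: M', U.Nonempty := fun U hU => hne U (by simp [hU])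
      have hfl' : (T :: M').flatMap Finset.toList ≠ [] := by
        rw [List.flatMap_cons]
        intro h2
        rcases List.append_eq_nil_iff.1 h2 with ⟨h3, _⟩
        exact (hne' T (by simp)).ne_empty (Finset.toList_eq_nil.1 h3)
      have hEq : (S :: T :: M').flatMap Finset.toList
          = S.toList ++ (T :: M').flatMap Finset.toList := List.flatMap_cons
      have hne2 : S.toList ++ (T :: M').flatMap Finset.toList ≠ [] := by
        rw [← hEq]; rwa [hEq] at hfl ⊢
      rw [List.getLast_congr _ hne2 hEq, List.getLast_append hne2,
        dif_neg (by simpa [List.isEmpty_iff] using hfl'), List.getLast_cons (by simp)]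
      exact ih (by simp) hne' hfl'

end helpers2

lemma ncf_essential {n : ℕ} (hn : 0 < n) {f : (Fin n → ZMod 2) → ZMod 2}
    {σ : Equiv.Perm (Fin n)} {A B : Fin n → ZMod 2} (h : IsNCF f σ A B) (i : Fin n) :
    EssentialIn f (σ i) := by
  set top : Fin n := ⟨n - 1, by omega⟩ with htopdef
  have htop : ∀ j : Fin n, j ≤ top := fun j => by
    have := j.isLt
    rw [Fin.le_def]
    show j.val ≤ n - 1
    omega
  by_cases hB : B i = 1 + B top
  · -- i < top; hit at i vs hit at top
    have hne : i ≠ top := by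
      intro hEq
      rw [hEq] at hB
      exact z2_ne_one_add (B top) hB
    have hilt : i < top := lt_of_le_of_ne (htop i) hne
    set x : Fin n → ZMod 2 :=
      fun v => if σ.symm v = i ∨ σ.symm v = top then A (σ.symm v) else A (σ.symm v) + 1
        with hxdef
    have hx : ∀ j : Fin n, x (σ j) = if j = i ∨ j = top then A j else A j + 1 := by
      intro j; simp [hxdef]
    refine ⟨x, ?_⟩
    have hfx : f x = B i := by
      apply h.1 x i
      · intro j hj
        rw [hx j, if_neg (by push_neg; exact ⟨ne_of_lt hj, ne_of_lt (lt_trans hj hilt)⟩)]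
        exact z2_add_one_ne _
      · rw [hx i, if_pos (Or.inl rfl)]
    have hfy : f (Function.update x (σ i) (x (σ i) + 1)) = B top := by
      apply h.1 _ top
      · intro j hj
        by_cases hji : j = i
        · subst hji
          rw [Function.update_self, hx j, if_pos (Or.inl rfl)]
          exact z2_add_one_ne _
        · rw [Function.update_of_ne (fun hh => hji (σ.injective hh)), hx j,
            if_neg (by push_neg; exact ⟨hji, ne_of_lt hj⟩)]
          exact z2_add_one_ne _
      · rw [Function.update_of_ne (fun hh => hne (σ.injective hh).symm), hx top,
          if_pos (Or.inr rfl)]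
    rw [hfx, hfy, hB]
    exact z2_one_add_ne _
  · -- all-miss vs hit at i
    set x : Fin n → ZMod 2 := fun v => A (σ.symm v) + 1 with hxdef
    have hx : ∀ j : Fin n, x (σ j) = A j + 1 := by intro j; simp [hxdef]
    refine ⟨x, ?_⟩
    have hfx : f x = 1 + B top := by
      apply h.2 x (fun j => by rw [hx j]; exact z2_add_one_ne _) top htop
    have hfy : f (Function.update x (σ i) (x (σ i) + 1)) = B i := by
      apply h.1 _ i
      · intro j hj
        rw [Function.update_of_ne (fun hh => (ne_of_lt hj) (σ.injective hh)), hx j]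
        exact z2_add_one_ne _
      · rw [Function.update_self, hx i]
        exact z2_two _
    rw [hfx, hfy]
    exact fun hh => hB hh.symm

/-- A Boolean function `f ≢ 0` with stratified representation with
layers `L` (of sizes `k₁, …, k_r`) is a nested canalizing function if and only if its
canalizing depth `k = k₁ + ⋯ + k_r` equals `n`, i.e., every variable appears in one of
the layers. -/
theorem stmt_12 (n : ℕ) (f : (Fin n → ZMod 2) → ZMod 2) (hf : f ≠ fun _ => 0)
    (L : List (Finset (Fin n))) (a : Fin n → ZMod 2)
    (p : (Fin n → ZMod 2) → ZMod 2) (q : ZMod 2)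
    (h : IsStratification f L a p q) :
    (∃ (σ : Equiv.Perm (Fin n)) (A B : Fin n → ZMod 2), IsNCF f σ A B) ↔
      (L.map Finset.card).sum = n := by
  obtain ⟨hlne, hdisj, hp_ess, hp_alt, -, -, hq0, hfeq⟩ := h
  rcases Nat.eq_zero_or_pos n with hn | hn
  · subst hn
    have hL : L = [] := by
      cases L with
      | nil => rfl
      | cons S M =>
        obtain ⟨v, -⟩ := hlne S (by simp)
        exact v.elim0
    constructor
    · intro _; simp [hL]
    · intro _
      exact ⟨1, Fin.elim0, Fin.elim0, fun x i => i.elim0, fun x _ i => i.elim0⟩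
  constructor
  · rintro ⟨σ, A, B, hNCF⟩
    by_contra hsum
    have hTne : lUnion L ≠ Finset.univ := by
      intro hEq
      apply hsum
      rw [← card_lUnion hdisj, hEq, Finset.card_univ, Fintype.card_fin]
    obtain ⟨v, hv⟩ : ∃ v, v ∉ lUnion L := by
      by_contra hcon; push_neg at hcon
      exact hTne (Finset.eq_univ_iff_forall.2 hcon)
    have hpT : ∀ w ∈ lUnion L, ¬ EssentialIn p w := fun w hw => by
      obtain ⟨S, hS, hwS⟩ := mem_lUnion.1 hw
      exact hp_ess S hS w hwS
    have hpov : ∀ x : Fin n → ZMod 2,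
        p (fun j => if j ∈ lUnion L then a j + 1 else x j) = p x := fun x =>
      p_override (lUnion L) hpT x _
    obtain ⟨c, hc⟩ : ∃ c : ZMod 2, ∀ x : Fin n → ZMod 2,
        f (fun j => if j ∈ lUnion L then a j + 1 else x j) = p x + c := by
      by_cases hL0 : L = []
      · subst hL0
        refine ⟨0, fun x => ?_⟩
        rw [hfeq]
        show p _ + q = p x + 0
        rw [hq0 rfl, hpov x]
      · refine ⟨((L.length + 1 : ℕ) : ZMod 2) + q, fun x => ?_⟩
        rw [hfeq]
        show nestedLayers a p L _ + q = _
        rw [nestedLayers_allOne L hL0 _ (fun S hS => extMonomial_eq_one (fun j hj => by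
          have hjT : j ∈ lUnion L := mem_lUnion.2 ⟨S, hS, hj⟩
          simp [hjT])), hpov x]
        ring
    have hIne : (Finset.univ.filter (fun i : Fin n => σ i ∉ lUnion L)).Nonempty :=
      ⟨σ.symm v, by simp [hv]⟩
    set i₀ := (Finset.univ.filter (fun i : Fin n => σ i ∉ lUnion L)).min' hIne with hi₀def
    have hi₀ : σ i₀ ∉ lUnion L := by
      have h2 := Finset.min'_mem _ hIne
      rw [← hi₀def] at h2
      simpa using h2
    have hltT : ∀ m : Fin n, m < i₀ → σ m ∈ lUnion L := by
      intro m hm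
      by_contra hcm
      exact absurd (Finset.min'_le _ m (by simp [hcm])) (not_le.2 hm)
    have hp1 : p = fun _ => 1 := by
      rcases hp_alt with h1 | hncan
      · exact h1
      exfalso
      apply hncan
      by_cases hA : ∃ j : Fin n, j < i₀ ∧ a (σ j) + 1 = A j
      · have hJne : (Finset.univ.filter
            (fun j : Fin n => j < i₀ ∧ a (σ j) + 1 = A j)).Nonempty := by
          obtain ⟨j, hj1, hj2⟩ := hA
          exact ⟨j, by simp [hj1, hj2]⟩
        set j₀ := Finset.min' _ hJne with hj₀def
        obtain ⟨hj₀lt, hj₀A⟩ : j₀ < i₀ ∧ a (σ j₀) + 1 = A j₀ := by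
          have h2 := Finset.min'_mem _ hJne
          rw [← hj₀def] at h2
          simpa using h2
        have key : ∀ x : Fin n → ZMod 2, p x + c = B j₀ := by
          intro x
          rw [← hc x]
          apply hNCF.1 _ j₀
          · intro m hm
            show (if σ m ∈ lUnion L then a (σ m) + 1 else x (σ m)) ≠ A m
            rw [if_pos (hltT m (lt_trans hm hj₀lt))]
            intro hcon
            have hmem : m ∈ Finset.univ.filter
                (fun j : Fin n => j < i₀ ∧ a (σ j) + 1 = A j) := by
              simp [lt_trans hm hj₀lt, hcon]
            exact absurd (Finset.min'_le _ m hmem) (not_le.2 hm)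
          · show (if σ j₀ ∈ lUnion L then a (σ j₀) + 1 else x (σ j₀)) = A j₀
            rw [if_pos (hltT j₀ hj₀lt)]
            exact hj₀A
        refine ⟨σ i₀, 0, B j₀ + c, fun x _ => ?_⟩
        rw [← key x, z2_cancel]
      · push_neg at hA
        refine ⟨σ i₀, A i₀, B i₀ + c, fun x hx => ?_⟩
        have key : p x + c = B i₀ := by
          rw [← hc x]
          apply hNCF.1 _ i₀
          · intro m hm
            show (if σ m ∈ lUnion L then a (σ m) + 1 else x (σ m)) ≠ A m
            rw [if_pos (hltT m hm)]
            exact hA m hm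
          · show (if σ i₀ ∈ lUnion L then a (σ i₀) + 1 else x (σ i₀)) = A i₀
            rw [if_neg hi₀]
            exact hx
        rw [← key, z2_cancel]
    have hup : ∀ (y : Fin n → ZMod 2) (c' : ZMod 2),
        p (Function.update y (σ i₀) c') = p y := by
      intro y c'; rw [hp1]
    have hnotess : ¬ EssentialIn f (σ i₀) := by
      rw [EssentialIn]; push_neg
      intro x
      rw [hfeq]
      show nestedLayers a p L x + q
          = nestedLayers a p L (Function.update x (σ i₀) (x (σ i₀) + 1)) + q
      rw [nestedLayers_update L (σ i₀)
        (fun S hS hmem => hi₀ (mem_lUnion.2 ⟨S, hS, hmem⟩)) x (x (σ i₀) + 1) hup]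
    exact hnotess (ncf_essential hn hNCF i₀)
  · intro hsum
    have hnud : (L.flatMap Finset.toList).Nodup := nodup_flatMap_toList hdisj
    have hlen : (L.flatMap Finset.toList).length = n := by
      rw [List.length_flatMap]
      rw [show L.map (fun a => a.toList.length) = L.map Finset.card from
        List.map_congr_left (fun S _ => Finset.length_toList S)]
      exact hsum
    have hL0 : L ≠ [] := by
      rintro rfl
      simp at hlen
      omega
    have hcover : ∀ w : Fin n, w ∈ L.flatMap Finset.toList := by
      have huniv : (L.flatMap Finset.toList).toFinset = Finset.univ :=
        Finset.eq_univ_of_card _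
          (by rw [List.toFinset_card_of_nodup hnud, hlen, Fintype.card_fin])
      intro w
      rw [← List.mem_toFinset, huniv]
      exact Finset.mem_univ w
    have hp1 : p = fun _ => 1 := by
      rcases hp_alt with h1 | hncan
      · exact h1
      exfalso; apply hncan
      have hallness : ∀ w : Fin n, ¬ EssentialIn p w := by
        intro w
        obtain ⟨S, hS, hwS⟩ := List.mem_flatMap.1 (hcover w)
        exact hp_ess S hS w (Finset.mem_toList.1 hwS)
      refine ⟨⟨0, hn⟩, 0, p (fun _ => 0), fun x _ => ?_⟩
      exact p_eq_of_agree_off Finset.univ (fun w _ => hallness w) x _ (by simp)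
    have hget : ∀ i : Fin n, i.val < (L.flatMap Finset.toList).length := fun i => by
      rw [hlen]; exact i.isLt
    have hinj : Function.Injective
        (fun i : Fin n => (L.flatMap Finset.toList).get ⟨i.val, hget i⟩) := by
      intro i j hEq
      have h2 := List.nodup_iff_injective_get.1 hnud hEq
      have h3 := congrArg (fun t : Fin (L.flatMap Finset.toList).length => t.val) h2
      exact Fin.ext h3
    obtain ⟨σ, hσ⟩ : ∃ σ : Equiv.Perm (Fin n), ∀ i : Fin n,
        σ i = (L.flatMap Finset.toList)[i.val]'(hget i) :=
      ⟨Equiv.ofBijective _ ((Finite.injective_iff_bijective).1 hinj), fun i => rfl⟩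
    refine ⟨σ, fun i => a (σ i),
      fun i => ((L.takeWhile (fun S => decide (σ i ∉ S))).length : ZMod 2) + q, ?_, ?_⟩
    · -- condition 1
      intro x i hmiss hhit
      have hmiss' : ∀ j (hj : j < i.val),
          x ((L.flatMap Finset.toList)[j]'(lt_trans hj (hget i)))
            = a ((L.flatMap Finset.toList)[j]'(lt_trans hj (hget i))) + 1 := by
        intro j hj
        have h2 : x (σ ⟨j, lt_trans hj i.isLt⟩) ≠ a (σ ⟨j, lt_trans hj i.isLt⟩) :=
          hmiss ⟨j, lt_trans hj i.isLt⟩ (by rw [Fin.lt_def]; exact hj)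
        rw [hσ ⟨j, lt_trans hj i.isLt⟩] at h2
        exact (z2_ne_iff _ _).1 h2
      obtain ⟨L₁, S, L₂, hEq, hAvoid, hMemS⟩ := dec_lemma a L i.val (hget i) x hmiss'
      have hhit' : x (σ i) = a (σ i) := hhit
      have hMemS' : σ i ∈ S := by rw [hσ i]; exact hMemS
      have hM0 : extMonomial S a x = 0 := extMonomial_eq_zero hMemS' hhit'
      have hnotin : ∀ T ∈ L₁, σ i ∉ T := by
        intro T hT hmem
        have h2 := hAvoid T hT (σ i) hmem
        rw [hhit'] at h2
        exact z2_add_one_ne _ h2.symm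
      rw [hfeq]
      show nestedLayers a p L x + q = _
      rw [hEq, nestedLayers_append_ones L₁ (S :: L₂) (by simp) x
        (fun T hT => extMonomial_eq_one (hAvoid T hT)),
        nestedLayers_zero L₂ x hM0]
      have hfin : (0 : ZMod 2) + (L₁.length : ZMod 2) + q
          = ((List.takeWhile (fun T => decide (σ i ∉ T)) (L₁ ++ S :: L₂)).length : ZMod 2)
            + q := by
        rw [takeWhile_layers L₁ S L₂ hnotin hMemS', zero_add]
      exact hfin
    · -- condition 2
      intro x hmiss i hi
      have hieq : i = ⟨n - 1, by omega⟩ := by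
        apply Fin.ext
        have h1 := i.isLt
        have h2 : (⟨n - 1, by omega⟩ : Fin n) ≤ i := hi ⟨n - 1, by omega⟩
        rw [Fin.le_def] at h2
        have h2' : n - 1 ≤ i.val := h2
        show i.val = n - 1
        omega
      subst hieq
      have havoid : ∀ S ∈ L, ∀ w ∈ S, x w = a w + 1 := by
        intro S hS w hw
        obtain ⟨j, hj, hgj⟩ :=
          List.mem_iff_getElem.1 (List.mem_flatMap.2 ⟨S, hS, Finset.mem_toList.2 hw⟩)
        have hjn : j < n := by omega
        have h2 : x (σ ⟨j, hjn⟩) ≠ a (σ ⟨j, hjn⟩) := hmiss ⟨j, hjn⟩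
        rw [hσ ⟨j, hjn⟩] at h2
        have h3 : x w ≠ a w := by rwa [hgj] at h2
        exact (z2_ne_iff _ _).1 h3
      have hfl : L.flatMap Finset.toList ≠ [] := by
        intro h2
        rw [h2] at hlen
        simp at hlen
        omega
      have h3 : σ ⟨n - 1, by omega⟩ ∈ L.getLast hL0 := by
        have h4 := getLast_flatMap_mem L hL0 hlne hfl
        rw [List.getLast_eq_getElem hfl] at h4
        have hlpos : 0 < (L.flatMap Finset.toList).length := List.length_pos_iff.2 hfl
        have h5 : σ ⟨n - 1, by omega⟩
            = (L.flatMap Finset.toList)[(L.flatMap Finset.toList).length - 1]'(by omega) := by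
          rw [hσ]
          congr 1
          show n - 1 = (L.flatMap Finset.toList).length - 1
          omega
        rw [h5]
        exact h4
      have hsplit : L.dropLast ++ [L.getLast hL0] = L := List.dropLast_append_getLast hL0
      have hnotin : ∀ T ∈ L.dropLast, σ ⟨n - 1, by omega⟩ ∉ T := by
        intro T hT hmem
        have hpw : List.Pairwise Disjoint (L.dropLast ++ [L.getLast hL0]) := by
          rw [hsplit]; exact hdisj
        have hd := (List.pairwise_append.1 hpw).2.2 T hT (L.getLast hL0) (by simp)
        exact Finset.disjoint_left.1 hd hmem h3
      have htw : L.takeWhile (fun S => decide (σ (⟨n - 1, by omega⟩ : Fin n) ∉ S))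
          = L.dropLast := by
        have h6 := takeWhile_layers L.dropLast (L.getLast hL0) [] hnotin h3
        rwa [hsplit] at h6
      rw [hfeq]
      show nestedLayers a p L x + q = _
      rw [nestedLayers_allOne L hL0 x (fun S hS => extMonomial_eq_one (havoid S hS))]
      have hpx : p x = 1 := by rw [hp1]
      have hr1 : 1 ≤ L.length := List.length_pos_iff.2 hL0
      have harith : ∀ u w : ZMod 2, 1 + (u + 1) + w = 1 + (u - 1 + w) := by decide
      have hfin : p x + ((L.length + 1 : ℕ) : ZMod 2) + q
          = 1 + (((List.takeWhile
              (fun S => decide (σ (⟨n - 1, by omega⟩ : Fin n) ∉ S)) L).length : ZMod 2)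
            + q) := by
        rw [htw, List.length_dropLast, hpx, Nat.cast_sub hr1]
        push_cast
        exact harith _ _
      exact hfin
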